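/- Let θ be an ℝ^d-valued random variable whose law has a density bounded by some constant B with respect to Lebesgue measure, let x ∈ ℝ^d be fixed, and let τ > 0. Then for every 0 < a < d there is a constant K = K(a,d,B) independent of x and τ such that E[|x + τ^{-1/d} θ|^{-a}] ≤ K τ^{a/d}. -/
import Mathlib


open MeasureTheory
open scoped ENNReal

/-- If `θ` is an `ℝ^d`-valued random variable whose law has a density bounded
by `B` with respect to Lebesgue measure, then for every `0 < a < d` there is a
constant `K = K(a,d,B)`, independent of `x` and `τ`, such that
`E[|x + τ^{-1/d} θ|^{-a}] ≤ K τ^{a/d}` for all `x ∈ ℝ^d` and `τ > 0`. -/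
theorem displacement_energy_bound (d : ℕ) (hd : 1 ≤ d)
    {Ω : Type*} [MeasurableSpace Ω] (P : Measure Ω) [IsProbabilityMeasure P]
    (θ : Ω → EuclideanSpace ℝ (Fin d)) (hθ_meas : Measurable θ)
    (B : ℝ) (hB : 0 < B)
    (g : EuclideanSpace ℝ (Fin d) → ℝ≥0∞) (hg_meas : Measurable g)
    (hg_bound : ∀ y, g y ≤ ENNReal.ofReal B)
    (hθ_law : Measure.map θ P = volume.withDensity g)
    (a : ℝ) (ha : 0 < a) (had : a < d) :
    ∃ K : ℝ, 0 < K ∧ ∀ (x : EuclideanSpace ℝ (Fin d)) (τ : ℝ), 0 < τ →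
      ∫⁻ ω, ENNReal.ofReal (‖x + τ ^ (-(1 : ℝ) / d) • θ ω‖ ^ (-a)) ∂P ≤
        ENNReal.ofReal (K * τ ^ (a / d)) := by
  haveI : Nonempty (Fin d) := ⟨⟨0, hd⟩⟩
  have hd0 : (0 : ℝ) < d := by positivity
  set V : ℝ := Real.sqrt Real.pi ^ d / Real.Gamma (d / 2 + 1) with hV_def
  have hV : 0 < V := by
    apply div_pos
    · have : (0:ℝ) < Real.sqrt Real.pi := Real.sqrt_pos.mpr Real.pi_pos
      positivity
    · exact Real.Gamma_pos_of_pos (by positivity)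
  set p : ℝ := (d : ℝ) / a with hp_def
  have hp1 : 1 < p := (one_lt_div ha).mpr had
  have hda : (0:ℝ) < (d : ℝ) - a := by linarith
  refine ⟨1 + B * V * (a / ((d : ℝ) - a)), by positivity, ?_⟩
  intro x τ hτ
  set c : ℝ := τ ^ (-(1 : ℝ) / d) with hc_def
  have hc : 0 < c := Real.rpow_pos_of_pos hτ _
  have hF_meas : Measurable fun ω => ‖x + c • θ ω‖ ^ (-a) := by measurability
  have hF_nn : ∀ ω, (0:ℝ) ≤ ‖x + c • θ ω‖ ^ (-a) :=
    fun ω => Real.rpow_nonneg (norm_nonneg _) _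
  rw [lintegral_eq_lintegral_meas_lt P (Filter.Eventually.of_forall hF_nn)
    hF_meas.aemeasurable]
  set D : ℝ≥0∞ := ENNReal.ofReal (B * V * τ) with hD_def
  -- tail bound
  have tail : ∀ t : ℝ, 0 < t →
      P {ω | t < ‖x + c • θ ω‖ ^ (-a)} ≤ min 1 (D * ENNReal.ofReal (t ^ (-p))) := by
    intro t ht
    refine le_min prob_le_one ?_
    set s : ℝ := t ^ (-a)⁻¹ with hs_def
    have hs : 0 < s := Real.rpow_pos_of_pos ht _
    have hsub : {ω | t < ‖x + c • θ ω‖ ^ (-a)} ⊆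
        θ ⁻¹' Metric.ball (-(c⁻¹ • x)) (s / c) := by
      intro ω hω
      simp only [Set.mem_setOf_eq] at hω
      have hr : 0 < ‖x + c • θ ω‖ := by
        rcases eq_or_lt_of_le (norm_nonneg (x + c • θ ω)) with h | h
        · exfalso
          rw [← h, Real.zero_rpow (neg_ne_zero.mpr ha.ne')] at hω
          exact absurd hω (not_lt.mpr ht.le)
        · exact h
      have hlt : ‖x + c • θ ω‖ < s :=
        (Real.lt_rpow_inv_iff_of_neg hr ht (neg_lt_zero.mpr ha)).mpr hω
      have hrepr : x + c • θ ω = c • (θ ω - -(c⁻¹ • x)) := by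
        rw [sub_neg_eq_add, smul_add, smul_inv_smul₀ hc.ne', add_comm]
      rw [hrepr, norm_smul, Real.norm_of_nonneg hc.le] at hlt
      simp only [Set.mem_preimage, Metric.mem_ball, dist_eq_norm]
      rw [lt_div_iff₀' hc]
      exact hlt
    calc P {ω | t < ‖x + c • θ ω‖ ^ (-a)}
        ≤ P (θ ⁻¹' Metric.ball (-(c⁻¹ • x)) (s / c)) := measure_mono hsub
      _ = Measure.map θ P (Metric.ball (-(c⁻¹ • x)) (s / c)) :=
          (Measure.map_apply hθ_meas Metric.isOpen_ball.measurableSet).symm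
      _ = ∫⁻ y in Metric.ball (-(c⁻¹ • x)) (s / c), g y := by
          rw [hθ_law, withDensity_apply _ Metric.isOpen_ball.measurableSet]
      _ ≤ ∫⁻ _ in Metric.ball (-(c⁻¹ • x)) (s / c), ENNReal.ofReal B :=
          setLIntegral_mono measurable_const fun y _ => hg_bound y
      _ = ENNReal.ofReal B * volume (Metric.ball (-(c⁻¹ • x)) (s / c)) := by
          rw [setLIntegral_const]
      _ = D * ENNReal.ofReal (t ^ (-p)) := by
          rw [EuclideanSpace.volume_ball]
          simp only [Fintype.card_fin]
          rw [← ENNReal.ofReal_pow (by positivity)]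
          have hsc : ((s / c) ^ d : ℝ) = t ^ (-p) * τ := by
            have hap : (-a)⁻¹ * (d:ℝ) = -p := by
              rw [hp_def, ← neg_inv, div_eq_mul_inv]; ring
            rw [div_pow, ← Real.rpow_natCast s d, ← Real.rpow_natCast c d, hs_def, hc_def,
              ← Real.rpow_mul ht.le, ← Real.rpow_mul hτ.le, hap,
              show (-(1:ℝ)/(d:ℝ)) * d = -1 by field_simp,
              Real.rpow_neg_one, div_inv_eq_mul]
          rw [hsc, ← ENNReal.ofReal_mul (by positivity), ← ENNReal.ofReal_mul hB.le,
            hD_def, ← ENNReal.ofReal_mul (by positivity)]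
          congr 1
          rw [hV_def]
          ring
  -- integrate the tail bound
  set t0 : ℝ := τ ^ (a / (d:ℝ)) with ht0_def
  have ht0 : 0 < t0 := Real.rpow_pos_of_pos hτ _
  have hneg : -p < -1 := by linarith
  have hint : IntegrableOn (fun t : ℝ => t ^ (-p)) (Set.Ioi t0) :=
    integrableOn_Ioi_rpow_of_lt hneg ht0
  have hnn : (0 : ℝ → ℝ) ≤ᵐ[volume.restrict (Set.Ioi t0)] fun t : ℝ => t ^ (-p) := by
    refine (ae_restrict_iff' measurableSet_Ioi).mpr (Filter.Eventually.of_forall ?_)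
    exact fun t htt => Real.rpow_nonneg (le_of_lt (ht0.trans htt)) _
  have hval : ∫ t in Set.Ioi t0, t ^ (-p) = t0 ^ (-p + 1) / (p - 1) := by
    rw [integral_Ioi_rpow_of_lt hneg ht0]
    rw [div_eq_div_iff (by linarith) (by linarith)]
    ring
  calc ∫⁻ t in Set.Ioi 0, P {ω | t < ‖x + c • θ ω‖ ^ (-a)}
      ≤ ∫⁻ t in Set.Ioi 0, min 1 (D * ENNReal.ofReal (t ^ (-p))) :=
        setLIntegral_mono' measurableSet_Ioi fun t htt => tail t htt
    _ = (∫⁻ t in Set.Ioc 0 t0, min 1 (D * ENNReal.ofReal (t ^ (-p)))) +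
        ∫⁻ t in Set.Ioi t0, min 1 (D * ENNReal.ofReal (t ^ (-p))) := by
        rw [← Set.Ioc_union_Ioi_eq_Ioi ht0.le,
          lintegral_union measurableSet_Ioi (Set.Ioc_disjoint_Ioi le_rfl)]
    _ ≤ (∫⁻ _ in Set.Ioc 0 t0, 1) + ∫⁻ t in Set.Ioi t0, D * ENNReal.ofReal (t ^ (-p)) :=
        add_le_add (lintegral_mono fun t => min_le_left _ _)
          (lintegral_mono fun t => min_le_right _ _)
    _ = ENNReal.ofReal t0 + D * ∫⁻ t in Set.Ioi t0, ENNReal.ofReal (t ^ (-p)) := by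
        rw [setLIntegral_one, Real.volume_Ioc, sub_zero,
          lintegral_const_mul' _ _ ENNReal.ofReal_ne_top]
    _ = ENNReal.ofReal t0 + D * ENNReal.ofReal (t0 ^ (-p + 1) / (p - 1)) := by
        rw [← ofReal_integral_eq_lintegral_ofReal hint hnn, hval]
    _ = ENNReal.ofReal ((1 + B * V * (a / ((d : ℝ) - a))) * τ ^ (a / (d:ℝ))) := by
        rw [hD_def, ← ENNReal.ofReal_mul (by positivity),
          ← ENNReal.ofReal_add ht0.le (mul_nonneg (by positivity)
            (div_nonneg (Real.rpow_nonneg ht0.le _) (by linarith)))]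
        congr 1
        have hpd : a / (d:ℝ) * p = 1 := by
          rw [hp_def, div_mul_div_comm, mul_comm a]
          exact div_self (by positivity)
        have e1 : t0 ^ (-p + 1) = t0 / τ := by
          rw [ht0_def, ← Real.rpow_mul hτ.le,
            show a / (d:ℝ) * (-p + 1) = a / (d:ℝ) - 1 by linear_combination -hpd,
            Real.rpow_sub hτ, Real.rpow_one]
        have e2 : p - 1 = ((d:ℝ) - a) / a := by
          rw [hp_def, sub_div, div_self ha.ne']
        rw [e1, e2]
        field_simp [hτ.ne', hda.ne', ha.ne']
        ring
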